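/- Let n ≥ 2 and 1 ≤ k ≤ n. Let φ := (1/√n) ∑_{i=0}^{n-1} e_i ⊗ e_i and ψ := (1/√n) ∑_{i=0}^{n-1} e_i ⊗ e_{i+1 mod n} in ℂ^n ⊗ ℂ^n, and set X := φ ψ^* ∈ M_n ⊗ M_n. Then there exist unit vectors v, w ∈ ℂ^n ⊗ ℂ^n with SR(v) ≤ k, SR(w) ≤ k, and a matrix P ∈ M_n with (P ⊗ I_n) v = w, such that ⟨v, X w⟩ = k/n. Consequently sup{ |⟨v, X w⟩| : v, w unit vectors with SR(v), SR(w) ≤ k and (P ⊗ I_n) v = w for some P ∈ M_n } ≥ k/n. (This is the second computation of Example 5.4, showing the OMIN^k matrix-order norm of X is twice its minimal order norm.) -/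

import Mathlib

open scoped ComplexOrder Kronecker
open Matrix

noncomputable section

/-- The standard inner product `⟨v, w⟩ = ∑ conj(vᵢ) wᵢ` on `I → ℂ`. -/
def inprod {I : Type*} [Fintype I] (v w : I → ℂ) : ℂ :=
  ∑ i, (starRingEnd ℂ) (v i) * w i

/-- `v` is a unit vector. -/
def UnitVec {I : Type*} [Fintype I] (v : I → ℂ) : Prop :=
  inprod v v = 1

/-- The Schmidt rank of a vector in `ℂ^I ⊗ ℂ^J`, i.e. the rank of the associated
`I × J` coefficient matrix. -/
noncomputable def SchmidtRank {I J : Type*} [Fintype I] [Fintype J] (v : I × J → ℂ) : ℕ :=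
  (Matrix.of fun i j => v (i, j)).rank

/-- The operator norm (largest singular value) of a matrix, as
`sup { |⟨v, A w⟩| : v, w unit vectors }`. -/
noncomputable def opNorm {I J : Type*} [Fintype I] [Fintype J] (A : Matrix I J ℂ) : ℝ :=
  sSup { t : ℝ | ∃ v w, UnitVec v ∧ UnitVec w ∧ t = ‖inprod v (A.mulVec w)‖ }

/-- The `S(k)`-norm of `X ∈ M_I ⊗ M_J`. -/
noncomputable def SNorm {I J : Type*} [Fintype I] [Fintype J] (k : ℕ)
    (X : Matrix (I × J) (I × J) ℂ) : ℝ :=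
  sSup { t : ℝ | ∃ v w : I × J → ℂ, UnitVec v ∧ UnitVec w ∧
    SchmidtRank v ≤ k ∧ SchmidtRank w ≤ k ∧
    t = ‖inprod v (X.mulVec w)‖ }

/-- `X` is a `k`-block positive (Hermitian) operator: `⟨v, X v⟩ ≥ 0` for every
vector of Schmidt rank at most `k`. -/
def kBlockPos {I J : Type*} [Fintype I] [Fintype J] (k : ℕ)
    (X : Matrix (I × J) (I × J) ℂ) : Prop :=
  X.IsHermitian ∧ ∀ v : I × J → ℂ, SchmidtRank v ≤ k → 0 ≤ inprod v (X.mulVec v)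

/-- `ρ` has Schmidt number at most `k` (in particular it is positive semidefinite):
it is a finite nonnegative combination of rank-one projections onto vectors of
Schmidt rank at most `k`. -/
def SchmidtNumberLE {I J : Type*} [Fintype I] [Fintype J] (k : ℕ)
    (ρ : Matrix (I × J) (I × J) ℂ) : Prop :=
  ∃ (N : ℕ) (c : Fin N → ℝ) (v : Fin N → (I × J → ℂ)),
    (∀ i, 0 ≤ c i) ∧ (∀ i, SchmidtRank (v i) ≤ k) ∧
    ρ = ∑ i, (c i : ℂ) • Matrix.vecMulVec (v i) (star (v i))

/-- `id_I ⊗ Φ` : the map applying `Φ` to the second tensor factor. -/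
noncomputable def tensorId {I : Type*} [Fintype I] {a b : ℕ}
    (Φ : Matrix (Fin a) (Fin a) ℂ →ₗ[ℂ] Matrix (Fin b) (Fin b) ℂ)
    (X : Matrix (I × Fin a) (I × Fin a) ℂ) : Matrix (I × Fin b) (I × Fin b) ℂ :=
  Matrix.of fun p q => Φ (Matrix.of fun s t => X (p.1, s) (q.1, t)) p.2 q.2

/-- The trace norm `‖X‖_tr = Tr √(X^* X)`. -/
noncomputable def trNorm {I : Type*} [Fintype I] [DecidableEq I] (X : Matrix I I ℂ) : ℝ :=
  (((Matrix.posSemidef_conjTranspose_mul_self X).1.eigenvectorUnitary : Matrix I I ℂ) *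
    Matrix.diagonal (((↑) : ℝ → ℂ) ∘ (fun x : ℝ => Real.sqrt x) ∘
      (Matrix.posSemidef_conjTranspose_mul_self X).1.eigenvalues) *
    (star (Matrix.posSemidef_conjTranspose_mul_self X).1.eigenvectorUnitary : Matrix I I ℂ)).trace.re

end
/-- The maximally entangled vector `φ = (1/√n) ∑ eᵢ ⊗ eᵢ`. -/
noncomputable def phiVec (n : ℕ) : Fin n × Fin n → ℂ :=
  fun p => if (p.1 : ℕ) = (p.2 : ℕ) then ((Real.sqrt n)⁻¹ : ℝ) else 0

/-- The shifted maximally entangled vector `ψ = (1/√n) ∑ eᵢ ⊗ e_{i+1 mod n}`. -/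
noncomputable def psiVec (n : ℕ) : Fin n × Fin n → ℂ :=
  fun p => if ((p.1 : ℕ) + 1) % n = (p.2 : ℕ) then ((Real.sqrt n)⁻¹ : ℝ) else 0

/-- The rank-one operator `X = |φ⟩⟨ψ|`. -/
noncomputable def exOp (n : ℕ) : Matrix (Fin n × Fin n) (Fin n × Fin n) ℂ :=
  Matrix.vecMulVec (phiVec n) (star (psiVec n))

section Aux
-- rank of matrix supported in first k columns

lemma rank_le_of_support {n k : ℕ} (hkn : k ≤ n) (M : Matrix (Fin n) (Fin n) ℂ)
    (h : ∀ (i j : Fin n), k ≤ (j : ℕ) → M i j = 0) : M.rank ≤ k := by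
  set A : Matrix (Fin n) (Fin k) ℂ := Matrix.of fun (i : Fin n) (a : Fin k) => M i (Fin.castLE hkn a)
  set B : Matrix (Fin k) (Fin n) ℂ := Matrix.of fun (a : Fin k) (j : Fin n) => if Fin.castLE hkn a = j then (1:ℂ) else 0
  have hM : M = A * B := by
    ext i j
    simp only [Matrix.mul_apply, A, B, Matrix.of_apply, mul_ite, mul_one, mul_zero]
    by_cases hj : (j : ℕ) < k
    · rw [Finset.sum_eq_single ⟨(j : ℕ), hj⟩]
      · simp [Fin.ext_iff]
      · intro b _ hb
        rw [if_neg]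
        intro hc
        exact hb (by simpa [Fin.ext_iff] using congrArg Fin.val hc)
      · simp
    · rw [h i j (le_of_not_gt hj), Finset.sum_eq_zero]
      intro b _
      rw [if_neg]
      intro hc
      exact hj (by simpa [Fin.ext_iff] using (congrArg Fin.val hc) ▸ b.isLt)
  calc M.rank = (A * B).rank := by rw [hM]
    _ ≤ B.rank := Matrix.rank_mul_le_right A B
    _ ≤ k := by simpa using B.rank_le_card_height

lemma sum_ite_lt {n : ℕ} (k : ℕ) (hkn : k ≤ n) (x : ℂ) :
    ∑ j : Fin n, (if (j : ℕ) < k then x else 0) = k * x := by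
  rw [Fin.sum_univ_eq_sum_range (fun m => if m < k then x else 0)]
  rw [← Finset.sum_filter]
  have : (Finset.range n).filter (· < k) = Finset.range k := by
    ext m; simp only [Finset.mem_filter, Finset.mem_range]; omega
  rw [this, Finset.sum_const, Finset.card_range, nsmul_eq_mul]

lemma inprod_eq_inner {I : Type*} [Fintype I] (v w : I → ℂ) :
    inprod v w = (inner (𝕜 := ℂ) ((WithLp.equiv 2 (I → ℂ)).symm v) ((WithLp.equiv 2 (I → ℂ)).symm w)) := by
  simp [inprod, PiLp.inner_apply, RCLike.inner_apply]
  exact Finset.sum_congr rfl (fun i _ => mul_comm _ _)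

-- factorization of the rank-one pairing
lemma inprod_exOp (n : ℕ) (v w : Fin n × Fin n → ℂ) :
    inprod v ((exOp n).mulVec w) = inprod v (phiVec n) * inprod (psiVec n) w := by
  simp only [inprod, exOp, Matrix.mulVec, Matrix.vecMulVec_apply, dotProduct,
    Pi.star_apply, RCLike.star_def]
  rw [Finset.sum_mul]
  congr 1; ext p
  rw [Finset.mul_sum, Finset.mul_sum]
  congr 1; ext q
  ring

lemma unitvec_norm {I : Type*} [Fintype I] {v : I → ℂ} (h : UnitVec v) :
    ‖(WithLp.equiv 2 (I → ℂ)).symm v‖ = 1 := by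
  have h1 := inprod_eq_inner v v
  rw [h] at h1
  have h2 := inner_self_eq_norm_sq_to_K (𝕜 := ℂ) ((WithLp.equiv 2 (I → ℂ)).symm v)
  rw [← h1] at h2
  have h3 : (‖(WithLp.equiv 2 (I → ℂ)).symm v‖ : ℝ)^2 = 1 := by
    have h4 : ((‖(WithLp.equiv 2 (I → ℂ)).symm v‖^2 : ℝ) : ℂ) = ((1:ℝ) : ℂ) := by
      push_cast; exact h2.symm
    exact_mod_cast h4
  nlinarith [norm_nonneg ((WithLp.equiv 2 (I → ℂ)).symm v)]

lemma abs_inprod_le {I : Type*} [Fintype I] (v w : I → ℂ) :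
    ‖inprod v w‖ ≤
      ‖(WithLp.equiv 2 (I → ℂ)).symm v‖ * ‖(WithLp.equiv 2 (I → ℂ)).symm w‖ := by
  rw [inprod_eq_inner]
  exact norm_inner_le_norm _ _

section Main
variable {n k : ℕ}

/-- generic structured vector -/
noncomputable def sVec (n k : ℕ) (f : Fin n → Fin n) : Fin n × Fin n → ℂ :=
  fun p => if p.1 = f p.2 ∧ (p.2 : ℕ) < k then (((Real.sqrt k)⁻¹ : ℝ) : ℂ) else 0

lemma sVec_unit (hk : 1 ≤ k) (hkn : k ≤ n) (f : Fin n → Fin n) : UnitVec (sVec n k f) := by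
  have hcc : (((Real.sqrt k)⁻¹ : ℝ) : ℂ) * (((Real.sqrt k)⁻¹ : ℝ) : ℂ) = (((k : ℝ)⁻¹ : ℝ) : ℂ) := by
    norm_cast
    rw [← mul_inv, Real.mul_self_sqrt (Nat.cast_nonneg k)]
  unfold UnitVec inprod sVec
  rw [Fintype.sum_prod_type_right]
  simp only [apply_ite (starRingEnd ℂ), map_zero, Complex.conj_ofReal,
    ite_mul, zero_mul, mul_ite, mul_zero, ite_and]
  simp only [Finset.sum_ite_eq', Finset.mem_univ, if_true]
  simp only [← ite_and, and_self]
  rw [sum_ite_lt k hkn, hcc]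
  have hk0 : (k : ℂ) ≠ 0 := Nat.cast_ne_zero.mpr (by omega)
  push_cast
  field_simp

lemma sVec_rank (hkn : k ≤ n) (f : Fin n → Fin n) : SchmidtRank (sVec n k f) ≤ k := by
  apply rank_le_of_support hkn
  intro i j hj
  simp only [Matrix.of_apply, sVec, ite_eq_right_iff]
  intro hc
  omega

lemma inprod_sVec_phi {n k : ℕ} (hkn : k ≤ n) :
    inprod (sVec n k id) (phiVec n) =
      k * ((((Real.sqrt k)⁻¹ : ℝ) : ℂ) * (((Real.sqrt n)⁻¹ : ℝ) : ℂ)) := by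
  unfold inprod sVec phiVec
  rw [Fintype.sum_prod_type_right]
  simp only [apply_ite (starRingEnd ℂ), map_zero, Complex.conj_ofReal, id_eq,
    ite_mul, zero_mul, mul_ite, mul_zero, ite_and, Fin.val_inj]
  simp only [Finset.sum_ite_eq', Finset.mem_univ, if_true]
  exact sum_ite_lt k hkn _

lemma inprod_psi_sVec {n k : ℕ} (hkn : k ≤ n) (f : Fin n → Fin n)
    (hf : ∀ j : Fin n, ((f j : ℕ) + 1) % n = (j : ℕ)) :
    inprod (psiVec n) (sVec n k f) =
      k * ((((Real.sqrt n)⁻¹ : ℝ) : ℂ) * (((Real.sqrt k)⁻¹ : ℝ) : ℂ)) := by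
  unfold inprod sVec psiVec
  rw [Fintype.sum_prod_type_right]
  simp only [apply_ite (starRingEnd ℂ), map_zero, Complex.conj_ofReal,
    ite_mul, zero_mul, mul_ite, mul_zero, ite_and]
  simp only [Finset.sum_ite_eq', Finset.mem_univ, if_true, hf]
  exact sum_ite_lt k hkn _

lemma kron_mulVec {n k : ℕ} (f : Fin n → Fin n) :
    ((Matrix.of fun a b : Fin n => if a = f b then (1:ℂ) else 0) ⊗ₖ
      (1 : Matrix (Fin n) (Fin n) ℂ)).mulVec (sVec n k id) = sVec n k f := by
  funext p
  simp only [Matrix.mulVec, dotProduct, Matrix.kroneckerMap_apply, Matrix.one_apply,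
    Matrix.of_apply, sVec, id_eq]
  rw [Fintype.sum_prod_type]
  simp only [ite_mul, zero_mul, one_mul, mul_ite, mul_zero, mul_one, ite_and]
  simp only [Finset.sum_ite_eq, Finset.sum_ite_eq', Finset.mem_univ, if_true]
  rw [Finset.sum_eq_single p.2]
  · by_cases h1 : p.1 = f p.2 <;> by_cases h2 : (p.2 : ℕ) < k <;> simp [h1, h2]
  · intro b _ hb
    simp [Ne.symm hb]
  · simp

end Main

end Aux
/-- Example 5.4, second computation: the `OMIN^k` matrix-order norm of `X = |φ⟩⟨ψ|`
is at least `k/n`. -/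
theorem example_matrix_order_norm (n k : ℕ) (hn : 2 ≤ n) (hk : 1 ≤ k) (hkn : k ≤ n) :
    (∃ (v w : Fin n × Fin n → ℂ) (P : Matrix (Fin n) (Fin n) ℂ),
      UnitVec v ∧ UnitVec w ∧ SchmidtRank v ≤ k ∧ SchmidtRank w ≤ k ∧
      (P ⊗ₖ (1 : Matrix (Fin n) (Fin n) ℂ)).mulVec v = w ∧
      inprod v ((exOp n).mulVec w) = (k : ℂ) / n) ∧
    (k : ℝ) / n ≤
      sSup { t : ℝ | ∃ v w : Fin n × Fin n → ℂ, UnitVec v ∧ UnitVec w ∧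
        SchmidtRank v ≤ k ∧ SchmidtRank w ≤ k ∧
        (∃ P : Matrix (Fin n) (Fin n) ℂ,
          (P ⊗ₖ (1 : Matrix (Fin n) (Fin n) ℂ)).mulVec v = w) ∧
        t = ‖inprod v ((exOp n).mulVec w)‖ } := by
  have hn0 : 0 < n := by omega
  set f : Fin n → Fin n := fun j => ⟨((j : ℕ) + (n - 1)) % n, Nat.mod_lt _ hn0⟩ with hfdef
  have hf : ∀ j : Fin n, ((f j : ℕ) + 1) % n = (j : ℕ) := by
    intro j
    show (((j : ℕ) + (n - 1)) % n + 1) % n = (j : ℕ)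
    rw [Nat.mod_add_mod]
    have h1 : (j : ℕ) + (n - 1) + 1 = (j : ℕ) + n := by omega
    rw [h1, Nat.add_mod_right, Nat.mod_eq_of_lt j.isLt]
  set v := sVec n k id with hv
  set w := sVec n k f with hw
  set P : Matrix (Fin n) (Fin n) ℂ :=
    Matrix.of fun a b : Fin n => if a = f b then (1:ℂ) else 0 with hP
  have hval : inprod v ((exOp n).mulVec w) = (k : ℂ) / n := by
    rw [inprod_exOp, hv, hw, inprod_sVec_phi hkn, inprod_psi_sVec hkn f hf]
    have hc : (((Real.sqrt k)⁻¹ : ℝ) : ℂ) * (((Real.sqrt k)⁻¹ : ℝ) : ℂ) = (((k:ℝ)⁻¹ : ℝ) : ℂ) := by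
      norm_cast
      rw [← mul_inv, Real.mul_self_sqrt (Nat.cast_nonneg k)]
    have hd : (((Real.sqrt n)⁻¹ : ℝ) : ℂ) * (((Real.sqrt n)⁻¹ : ℝ) : ℂ) = (((n:ℝ)⁻¹ : ℝ) : ℂ) := by
      norm_cast
      rw [← mul_inv, Real.mul_self_sqrt (Nat.cast_nonneg n)]
    have hre : ((k:ℂ) * ((((Real.sqrt k)⁻¹ : ℝ) : ℂ) * (((Real.sqrt n)⁻¹ : ℝ) : ℂ))) *
        ((k:ℂ) * ((((Real.sqrt n)⁻¹ : ℝ) : ℂ) * (((Real.sqrt k)⁻¹ : ℝ) : ℂ))) =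
        ((k:ℂ) * (k:ℂ)) * ((((Real.sqrt k)⁻¹ : ℝ) : ℂ) * (((Real.sqrt k)⁻¹ : ℝ) : ℂ)) *
          ((((Real.sqrt n)⁻¹ : ℝ) : ℂ) * (((Real.sqrt n)⁻¹ : ℝ) : ℂ)) := by ring
    rw [hre, hc, hd]
    have hk0 : (k : ℂ) ≠ 0 := Nat.cast_ne_zero.mpr (by omega)
    have hn0' : (n : ℂ) ≠ 0 := Nat.cast_ne_zero.mpr (by omega)
    push_cast
    field_simp
  have hmv : (P ⊗ₖ (1 : Matrix (Fin n) (Fin n) ℂ)).mulVec v = w := kron_mulVec f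
  have hvu : UnitVec v := sVec_unit hk hkn id
  have hwu : UnitVec w := sVec_unit hk hkn f
  have hvr : SchmidtRank v ≤ k := sVec_rank hkn id
  have hwr : SchmidtRank w ≤ k := sVec_rank hkn f
  constructor
  · exact ⟨v, w, P, hvu, hwu, hvr, hwr, hmv, hval⟩
  · apply le_csSup
    · refine ⟨‖(WithLp.equiv 2 (Fin n × Fin n → ℂ)).symm (phiVec n)‖ *
        ‖(WithLp.equiv 2 (Fin n × Fin n → ℂ)).symm (psiVec n)‖, ?_⟩
      rintro t ⟨v', w', hv', hw', -, -, -, rfl⟩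
      rw [inprod_exOp, norm_mul]
      calc ‖inprod v' (phiVec n)‖ * ‖inprod (psiVec n) w'‖
          ≤ (‖(WithLp.equiv 2 (Fin n × Fin n → ℂ)).symm v'‖ *
              ‖(WithLp.equiv 2 (Fin n × Fin n → ℂ)).symm (phiVec n)‖) *
            (‖(WithLp.equiv 2 (Fin n × Fin n → ℂ)).symm (psiVec n)‖ *
              ‖(WithLp.equiv 2 (Fin n × Fin n → ℂ)).symm w'‖) := by
            apply mul_le_mul (abs_inprod_le _ _) (abs_inprod_le _ _)
              (norm_nonneg _) (by positivity)
        _ = ‖(WithLp.equiv 2 (Fin n × Fin n → ℂ)).symm (phiVec n)‖ *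
            ‖(WithLp.equiv 2 (Fin n × Fin n → ℂ)).symm (psiVec n)‖ := by
            rw [unitvec_norm hv', unitvec_norm hw']; ring
    · refine ⟨v, w, hvu, hwu, hvr, hwr, ⟨P, hmv⟩, ?_⟩
      rw [hval, norm_div, Complex.norm_natCast, Complex.norm_natCast]
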